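/- Let n ≥ 1 and let Σ ⊆ ℂ∖{0} satisfy −Σ = Σ. Let D = diag(I_n, −I_n) and σ₀(X) = D X D. Let a, ā ∈ M(2n,ℂ) be constant matrices with D a D = −a and D ā D = −ā, and set E(x,λ) = exp(x(λ a + λ⁻¹ ā)). Suppose m₊, m₋ : ℝ × Σ → GL(2n,ℂ) and V : Σ → M(2n,ℂ) satisfy, for all x ∈ ℝ and λ ∈ Σ: m₊(x,λ) = m₋(x,λ) E(x,λ)⁻¹ V(λ) E(x,λ), σ₀(m₊(x,−λ)) = m₋(x,λ), and σ₀(m₋(x,−λ)) = m₊(x,λ). Then σ₀(V(−λ)) V(λ) = I for all λ ∈ Σ. -/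

import Mathlib

/- STATEMENT 14: the σ₀-symmetry constraint (E:u-reality-4) on the continuous
   scattering data V established in Theorem 4.5 (T:sc). -/

noncomputable section

open Matrix

/-- D = diag(I_n, −I_n) on Fin n ⊕ Fin n -/
def Dmat (n : ℕ) : Matrix (Fin n ⊕ Fin n) (Fin n ⊕ Fin n) ℂ :=
  Matrix.diagonal (Sum.elim (fun _ => (1 : ℂ)) (fun _ => -1))

/-- σ₀(X) = D X D -/
def sigma0 {n : ℕ} (X : Matrix (Fin n ⊕ Fin n) (Fin n ⊕ Fin n) ℂ) :
    Matrix (Fin n ⊕ Fin n) (Fin n ⊕ Fin n) ℂ :=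
  Dmat n * X * Dmat n

/-- E(x,λ) = exp(x(λ a + λ⁻¹ ā)) -/
def Emat {n : ℕ} (a abar : Matrix (Fin n ⊕ Fin n) (Fin n ⊕ Fin n) ℂ) (x : ℝ) (lam : ℂ) :
    Matrix (Fin n ⊕ Fin n) (Fin n ⊕ Fin n) ℂ :=
  NormedSpace.exp ((x : ℂ) • (lam • a + lam⁻¹ • abar))

theorem sigma0_symmetry_of_scattering_data (n : ℕ) (hn : 1 ≤ n)
    (Sa : Set ℂ) (hS0 : (0 : ℂ) ∉ Sa) (hSneg : ∀ lam : ℂ, lam ∈ Sa ↔ -lam ∈ Sa)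
    (a abar : Matrix (Fin n ⊕ Fin n) (Fin n ⊕ Fin n) ℂ)
    (ha : Dmat n * a * Dmat n = -a) (habar : Dmat n * abar * Dmat n = -abar)
    (mp mm : ℝ → ℂ → Matrix (Fin n ⊕ Fin n) (Fin n ⊕ Fin n) ℂ)
    (V : ℂ → Matrix (Fin n ⊕ Fin n) (Fin n ⊕ Fin n) ℂ)
    (hmpU : ∀ x : ℝ, ∀ lam ∈ Sa, IsUnit (mp x lam))
    (hmmU : ∀ x : ℝ, ∀ lam ∈ Sa, IsUnit (mm x lam))
    (hjump : ∀ x : ℝ, ∀ lam ∈ Sa,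
      mp x lam = mm x lam * (Emat a abar x lam)⁻¹ * V lam * Emat a abar x lam)
    (hsym1 : ∀ x : ℝ, ∀ lam ∈ Sa, sigma0 (mp x (-lam)) = mm x lam)
    (hsym2 : ∀ x : ℝ, ∀ lam ∈ Sa, sigma0 (mm x (-lam)) = mp x lam) :
    ∀ lam ∈ Sa, sigma0 (V (-lam)) * V lam = 1 := by
  intro lam hlam
  have hlam' : -lam ∈ Sa := (hSneg lam).mp hlam
  -- D * D = 1
  have hDD : Dmat n * Dmat n = 1 := by
    rw [Dmat, Matrix.diagonal_mul_diagonal]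
    convert Matrix.diagonal_one with i
    cases i <;> simp
  -- sigma0 is multiplicative
  have hsmul : ∀ X Y : Matrix (Fin n ⊕ Fin n) (Fin n ⊕ Fin n) ℂ,
      sigma0 (X * Y) = sigma0 X * sigma0 Y := by
    intro X Y
    simp only [sigma0]
    calc Dmat n * (X * Y) * Dmat n
        = Dmat n * X * (Dmat n * Dmat n) * Y * Dmat n := by rw [hDD]; noncomm_ring
      _ = Dmat n * X * Dmat n * (Dmat n * Y * Dmat n) := by noncomm_ring
  -- E(0, μ) = 1
  have hE0 : ∀ mu : ℂ, Emat a abar 0 mu = 1 := by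
    intro mu
    simp [Emat, NormedSpace.exp_zero]
  -- jump at x = 0 for lam and -lam
  have hj : mp 0 lam = mm 0 lam * V lam := by
    have := hjump 0 lam hlam
    simpa [hE0] using this
  have hj' : mp 0 (-lam) = mm 0 (-lam) * V (-lam) := by
    have := hjump 0 (-lam) hlam'
    simpa [hE0] using this
  -- apply sigma0 to hj'
  have key : mm 0 lam = mp 0 lam * sigma0 (V (-lam)) := by
    have h1 : sigma0 (mp 0 (-lam)) = sigma0 (mm 0 (-lam)) * sigma0 (V (-lam)) := by
      rw [hj', hsmul]
    rw [hsym1 0 lam hlam, hsym2 0 lam hlam] at h1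
    exact h1
  -- so mm 0 lam = mm 0 lam * (V lam * sigma0 (V (-lam)))
  have h2 : mm 0 lam * (V lam * sigma0 (V (-lam))) = mm 0 lam * 1 := by
    rw [mul_one, ← Matrix.mul_assoc, ← hj, ← key]
  have hu := hmmU 0 lam hlam
  have h3 : V lam * sigma0 (V (-lam)) = 1 := by
    have := (hu.mul_right_inj).mp h2
    simpa using this
  exact mul_eq_one_comm.mp h3

end
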